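/- Assume the Carleson estimate: there is c > 1 such that G(x,y) ≤ c·G(A_r(Q), y) whenever Q ∈ ∂D, r ∈ (0, κR/4), y ∈ D \ closure(B(Q,4r)) and x ∈ D ∩ B(Q,r). Then there exists a constant c > 0 such that for every x, y ∈ D with r(x,y) < ε1 and every z ∈ D ∩ B(Q_x, r(x,y)): g(z) ≤ c·g(A_{r(x,y)}(Q_x)). -/

import Mathlib

open Metric Set MeasureTheory

/-- Distance to the boundary of `D`. -/
noncomputable def rho {d : ℕ} (D : Set (EuclideanSpace ℝ (Fin d)))
    (x : EuclideanSpace ℝ (Fin d)) : ℝ :=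
  Metric.infDist x (frontier D)

/-- `r(x,y) := max(ρ_D(x), ρ_D(y), |x-y|)`. -/
noncomputable def rxy {d : ℕ} (D : Set (EuclideanSpace ℝ (Fin d)))
    (x y : EuclideanSpace ℝ (Fin d)) : ℝ :=
  max (max (rho D x) (rho D y)) (dist x y)

/-- The set `𝓑(x,y)`. -/
noncomputable def BB {d : ℕ} (D : Set (EuclideanSpace ℝ (Fin d))) (M ε1 : ℝ)
    (z0 x y : EuclideanSpace ℝ (Fin d)) : Set (EuclideanSpace ℝ (Fin d)) :=
  if rxy D x y < ε1 then
    {A | A ∈ D ∧ rxy D x y / M < rho D A ∧ max (dist x A) (dist y A) < 5 * rxy D x y}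
  else {z0}

open Classical in
/-- `g(x) := min(G(x,z0), C1)`, with the convention `g(z0) = C1` (since `G(z0,z0) = ∞`). -/
noncomputable def gfun {d : ℕ} (G : EuclideanSpace ℝ (Fin d) → EuclideanSpace ℝ (Fin d) → ℝ)
    (z0 : EuclideanSpace ℝ (Fin d)) (C1 : ℝ) (x : EuclideanSpace ℝ (Fin d)) : ℝ :=
  if x = z0 then C1 else min (G x z0) C1

theorem stmt5
    {d : ℕ} (hd : 2 ≤ d)
    {D : Set (EuclideanSpace ℝ (Fin d))} (hDopen : IsOpen D) (hDbdd : Bornology.IsBounded D)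
    {κ R : ℝ} (hκ0 : 0 < κ) (hκ2 : κ ≤ 1 / 2) (hR : 0 < R)
    {A : EuclideanSpace ℝ (Fin d) → ℝ → EuclideanSpace ℝ (Fin d)}
    (hfat : ∀ Q ∈ frontier D, ∀ r : ℝ, 0 < r → r < R →
      A Q r ∈ D ∧ ball (A Q r) (κ * r) ⊆ D ∩ ball Q r)
    {M ε1 : ℝ} (hM : M = 2 / κ) (hε1 : ε1 = R / (12 * M))
    {z0 : EuclideanSpace ℝ (Fin d)} (hz0D : z0 ∈ D)
    (hz0l : 2 * R / M < rho D z0) (hz0u : rho D z0 < R)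
    {α : ℝ} (hα0 : 0 < α) (hα2 : α < 2) (hαd : α < d)
    {G : EuclideanSpace ℝ (Fin d) → EuclideanSpace ℝ (Fin d) → ℝ}
    (hGsymm : ∀ x y, G x y = G y x)
    (hGpos : ∀ x ∈ D, ∀ y ∈ D, x ≠ y → 0 < G x y)
    {C0 : ℝ} (hC0 : 1 ≤ C0)
    (hGup : ∀ x ∈ D, ∀ y ∈ D, x ≠ y → G x y ≤ C0 * dist x y ^ (α - d))
    (hGlow : ∀ x ∈ D, ∀ y ∈ D, x ≠ y → dist x y ≤ rho D y / 2 →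
      C0⁻¹ * dist x y ^ (α - d) ≤ G x y)
    {C1 : ℝ} (hC1 : C1 = C0 * (2 : ℝ) ^ ((d : ℝ) - α) * rho D z0 ^ (α - d))
    {Qb : EuclideanSpace ℝ (Fin d) → EuclideanSpace ℝ (Fin d)}
    (hQb : ∀ x ∈ D, Qb x ∈ frontier D ∧ dist x (Qb x) = rho D x)
    (hCarl : ∃ c > 1, ∀ Q ∈ frontier D, ∀ r : ℝ, 0 < r → r < κ * R / 4 →
      ∀ y ∈ D \ closure (ball Q (4 * r)), ∀ x ∈ D ∩ ball Q r, G x y ≤ c * G (A Q r) y)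
 :
    ∃ c > 0, ∀ x ∈ D, ∀ y ∈ D, rxy D x y < ε1 →
      ∀ z ∈ D ∩ ball (Qb x) (rxy D x y),
        gfun G z0 C1 z ≤ c * gfun G z0 C1 (A (Qb x) (rxy D x y)) := by
  obtain ⟨c, hc1, hCar⟩ := hCarl
  refine ⟨c, by linarith, ?_⟩
  intro x hx y hy hrε z hz
  set r := rxy D x y with hrdef
  -- basic positivity facts
  have hMpos : 0 < M := by rw [hM]; positivity
  have h2RM : 2 * R / M = κ * R := by rw [hM]; field_simp
  have hε1eq : ε1 = κ * R / 24 := by rw [hε1, hM]; field_simp; ring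
  have hrz0 : κ * R < rho D z0 := by rw [← h2RM]; exact hz0l
  have hκR : 0 < κ * R := mul_pos hκ0 hR
  -- frontier is nonempty
  haveI : Nonempty (Fin d) := ⟨⟨0, by omega⟩⟩
  have hfr : (frontier D).Nonempty := by
    rw [nonempty_frontier_iff]
    refine ⟨⟨x, hx⟩, fun h => ?_⟩
    exact NormedSpace.unbounded_univ ℝ (EuclideanSpace ℝ (Fin d)) (h ▸ hDbdd)
  -- rho is positive on D
  have hrhopos : ∀ w ∈ D, 0 < rho D w := by
    intro w hw
    refine (IsClosed.notMem_iff_infDist_pos isClosed_frontier hfr).mp ?_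
    intro hmem
    rw [hDopen.frontier_eq] at hmem
    exact hmem.2 hw
  have hr0 : 0 < r :=
    lt_of_lt_of_le (hrhopos x hx) ((le_max_left _ _).trans (le_max_left _ _))
  have hrκ : r < κ * R / 4 := by rw [hε1eq] at hrε; linarith
  have hrR : r < R := by nlinarith
  -- the boundary point and the fat-cone point
  obtain ⟨hQfr, hQdist⟩ := hQb x hx
  obtain ⟨hAD, hAball⟩ := hfat (Qb x) hQfr r hr0 hrR
  have hAQ : dist (A (Qb x) r) (Qb x) < r :=
    (hAball (mem_ball_self (mul_pos hκ0 hr0))).2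
  have hz0Q : κ * R < dist z0 (Qb x) :=
    lt_of_lt_of_le hrz0 (Metric.infDist_le_dist_of_mem hQfr)
  -- z0 is far from the ball
  have hz0far : z0 ∈ D \ closure (ball (Qb x) (4 * r)) := by
    refine ⟨hz0D, fun hcl => ?_⟩
    have := Metric.closure_ball_subset_closedBall hcl
    rw [Metric.mem_closedBall] at this
    linarith
  -- Carleson estimate
  obtain ⟨hzD, hzball⟩ := hz
  have hGest : G z z0 ≤ c * G (A (Qb x) r) z0 :=
    hCar (Qb x) hQfr r hr0 hrκ z0 hz0far z ⟨hzD, hzball⟩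
  -- z ≠ z0 and A ≠ z0
  have hzQ : dist z (Qb x) < r := Metric.mem_ball.mp hzball
  have hzne : z ≠ z0 := by
    intro h; rw [h] at hzQ; linarith
  have hAne : A (Qb x) r ≠ z0 := by
    intro h; rw [h] at hAQ; linarith
  -- C1 > 0
  have hC1pos : 0 < C1 := by
    rw [hC1]
    have h1 : 0 < rho D z0 := lt_trans hκR hrz0
    exact mul_pos (mul_pos (lt_of_lt_of_le one_pos hC0)
      (Real.rpow_pos_of_pos two_pos _)) (Real.rpow_pos_of_pos h1 _)
  rw [gfun, gfun, if_neg hzne, if_neg hAne]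
  calc min (G z z0) C1 ≤ min (c * G (A (Qb x) r) z0) (c * C1) :=
        min_le_min hGest (le_mul_of_one_le_left hC1pos.le hc1.le)
    _ = c * min (G (A (Qb x) r) z0) C1 := (mul_min_of_nonneg _ _ (by linarith)).symm
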